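/- Let (f,g) ∈ 𝒞₂(I), φ := f'/g', and suppose αf² + βfg + γg² + δf + εg + η = 0 on I with (α,β,γ) ≠ (0,0,0). Then on I the identity φ'·(2αf + βg + δ) + 2g'·(αφ² + βφ + γ) = 0 holds. -/

import Mathlib

/-- Differentiated form of a quadratic relation satisfied by a 𝒞₂ pair:
`φ'·(2αf + βg + δ) + 2g'·(αφ² + βφ + γ) = 0` where `φ = f'/g'`. -/
theorem conic_differentiated_identity
    (I : Set ℝ) (hI : IsOpen I) (hIc : I.OrdConnected) (hne : I.Nonempty)
    (f g : ℝ → ℝ)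
    (hf : ContDiffOn ℝ 2 f I) (hg : ContDiffOn ℝ 2 g I)
    (hg' : ∀ x ∈ I, deriv g x ≠ 0)
    (hphi' : ∀ x ∈ I, deriv (fun t => deriv f t / deriv g t) x ≠ 0)
    (α β γ δ ε η : ℝ) (habc : (α, β, γ) ≠ (0, 0, 0))
    (hconic : ∀ x ∈ I,
      α * f x ^ 2 + β * f x * g x + γ * g x ^ 2 + δ * f x + ε * g x + η = 0) :
    ∀ x ∈ I,
      deriv (fun t => deriv f t / deriv g t) x * (2 * α * f x + β * g x + δ) +
        2 * deriv g x *
          (α * (deriv f x / deriv g x) ^ 2 + β * (deriv f x / deriv g x) + γ) = 0 := by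
  have hfd : ∀ y ∈ I, DifferentiableAt ℝ f y := fun y hy =>
    (hf.differentiableOn (by norm_num)).differentiableAt (hI.mem_nhds hy)
  have hgd : ∀ y ∈ I, DifferentiableAt ℝ g y := fun y hy =>
    (hg.differentiableOn (by norm_num)).differentiableAt (hI.mem_nhds hy)
  have hfd' : ∀ y ∈ I, DifferentiableAt ℝ (deriv f) y := fun y hy =>
    (((hf.deriv_of_isOpen hI (m := 1) le_rfl).differentiableOn one_ne_zero)).differentiableAt
      (hI.mem_nhds hy)
  have hgd' : ∀ y ∈ I, DifferentiableAt ℝ (deriv g) y := fun y hy =>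
    (((hg.deriv_of_isOpen hI (m := 1) le_rfl).differentiableOn one_ne_zero)).differentiableAt
      (hI.mem_nhds hy)
  -- Step 1: first derivative of the conic relation vanishes
  have hD1 : ∀ y ∈ I,
      deriv f y * (2 * α * f y + β * g y + δ) +
        deriv g y * (β * f y + 2 * γ * g y + ε) = 0 := by
    intro y hy
    have hfy := (hfd y hy).hasDerivAt
    have hgy := (hgd y hy).hasDerivAt
    have hF : HasDerivAt
        (fun t => α * f t ^ 2 + β * f t * g t + γ * g t ^ 2 + δ * f t + ε * g t + η)
        (deriv f y * (2 * α * f y + β * g y + δ) +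
          deriv g y * (β * f y + 2 * γ * g y + ε)) y := by
      have h1 := ((hfy.pow 2).const_mul α)
      have h2 := ((hfy.mul hgy).const_mul β)
      have h3 := ((hgy.pow 2).const_mul γ)
      have h4 := hfy.const_mul δ
      have h5 := hgy.const_mul ε
      have := ((((h1.add h2).add h3).add h4).add h5).add_const η
      refine (this.congr_of_eventuallyEq (Filter.Eventually.of_forall fun t => ?_)).congr_deriv ?_
      · simp only [Pi.add_apply, Pi.pow_apply, Pi.mul_apply]; ring
      · norm_num; ring
    have hEq : (fun t => α * f t ^ 2 + β * f t * g t + γ * g t ^ 2 + δ * f t + ε * g t + η)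
        =ᶠ[nhds y] fun _ => (0 : ℝ) :=
      Filter.eventuallyEq_of_mem (hI.mem_nhds hy) fun z hz => hconic z hz
    exact hF.unique ((hasDerivAt_const y (0 : ℝ)).congr_of_eventuallyEq hEq)
  -- Step 2: the reduced (divided by g') relation vanishes on I
  have hH : ∀ y ∈ I,
      (deriv f y / deriv g y) * (2 * α * f y + β * g y + δ) +
        (β * f y + 2 * γ * g y + ε) = 0 := by
    intro y hy
    have hB := hg' y hy
    have h1 := hD1 y hy
    field_simp
    linarith [h1]
  -- Step 3: differentiate the reduced relation at x
  intro x hx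
  have hBx := hg' x hx
  have hfx := (hfd x hx).hasDerivAt
  have hgx := (hgd x hx).hasDerivAt
  have hφd : DifferentiableAt ℝ (fun t => deriv f t / deriv g t) x :=
    (hfd' x hx).div (hgd' x hx) hBx
  have hφ : HasDerivAt (fun t => deriv f t / deriv g t)
      (deriv (fun t => deriv f t / deriv g t) x) x := hφd.hasDerivAt
  have hHd : HasDerivAt
      (fun t => (deriv f t / deriv g t) * (2 * α * f t + β * g t + δ) +
        (β * f t + 2 * γ * g t + ε))
      (deriv (fun t => deriv f t / deriv g t) x * (2 * α * f x + β * g x + δ) +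
        (deriv f x / deriv g x) * (2 * α * deriv f x + β * deriv g x) +
        (β * deriv f x + 2 * γ * deriv g x)) x := by
    have hlin : HasDerivAt (fun t => 2 * α * f t + β * g t + δ)
        (2 * α * deriv f x + β * deriv g x) x :=
      ((hfx.const_mul (2 * α)).add (hgx.const_mul β)).add_const δ
    have hlin2 : HasDerivAt (fun t => β * f t + 2 * γ * g t + ε)
        (β * deriv f x + 2 * γ * deriv g x) x :=
      ((hfx.const_mul β).add (hgx.const_mul (2 * γ))).add_const ε
    exact (hφ.mul hlin).add hlin2
  have hEq2 : (fun t => (deriv f t / deriv g t) * (2 * α * f t + β * g t + δ) +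
      (β * f t + 2 * γ * g t + ε)) =ᶠ[nhds x] fun _ => (0 : ℝ) :=
    Filter.eventuallyEq_of_mem (hI.mem_nhds hx) fun z hz => hH z hz
  have hE : deriv (fun t => deriv f t / deriv g t) x * (2 * α * f x + β * g x + δ) +
      (deriv f x / deriv g x) * (2 * α * deriv f x + β * deriv g x) +
      (β * deriv f x + 2 * γ * deriv g x) = 0 :=
    hHd.unique ((hasDerivAt_const x (0 : ℝ)).congr_of_eventuallyEq hEq2)
  have hAB : deriv f x = (deriv f x / deriv g x) * deriv g x := (div_mul_cancel₀ _ hBx).symm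
  linear_combination hE - (2 * α * (deriv f x / deriv g x) + β) * hAB
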